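/- arXiv:1703.08728 — 2 statements merged into one kernel-verified Lean document; each statement's English description precedes it below -/
import Mathlib

section
/- Let G be a simple connected graph with n vertices, m edges, minimum degree δ, and adjacency spectral radius ϱ(G). Then ϱ(G) ≤ (δ-1)/2 + sqrt(2m - nδ + (δ+1)²/4). -/
open SimpleGraph Matrix Polynomial Real

/-- The characteristic polynomial of the adjacency matrix of a finite simple graph. -/
noncomputable def adjCharpoly {V : Type*} [Fintype V] (G : SimpleGraph V) : Polynomial ℝ :=
  letI := Classical.decEq V
  letI : DecidableRel G.Adj := Classical.decRel _
  ((G.adjMatrix ℝ).charpoly)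

/-- The adjacency spectrum of a finite simple graph: the multiset of real roots of the
characteristic polynomial of its adjacency matrix (with multiplicity). -/
noncomputable def adjSpectrum {V : Type*} [Fintype V] (G : SimpleGraph V) : Multiset ℝ :=
  (adjCharpoly G).roots

/-- The Laplacian spectrum of a finite simple graph (with multiplicity). -/
noncomputable def lapSpectrum {V : Type*} [Fintype V] (G : SimpleGraph V) : Multiset ℝ :=
  letI := Classical.decEq V
  letI : DecidableRel G.Adj := Classical.decRel _
  ((G.lapMatrix ℝ).charpoly).roots

/-- The adjacency spectral radius: the largest adjacency eigenvalue. -/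
noncomputable def specRadius {V : Type*} [Fintype V] (G : SimpleGraph V) : ℝ :=
  sSup {x : ℝ | x ∈ adjSpectrum G}

/-- The join `G ∇ H` of two graphs: disjoint union plus all cross edges. -/
def graphJoin {α β : Type*} (G : SimpleGraph α) (H : SimpleGraph β) :
    SimpleGraph (α ⊕ β) where
  Adj x y :=
    match x, y with
    | Sum.inl a, Sum.inl b => G.Adj a b
    | Sum.inr a, Sum.inr b => H.Adj a b
    | Sum.inl _, Sum.inr _ => True
    | Sum.inr _, Sum.inl _ => True
  symm := ⟨by
    rintro (a | a) (b | b) h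
    · exact G.adj_symm h
    · trivial
    · trivial
    · exact H.adj_symm h⟩
  loopless := ⟨by
    rintro (a | a) h
    · exact G.irrefl h
    · exact H.irrefl h⟩

/-- `m` disjoint copies of the cycle `Cₙ`. -/
def mCycles (m n : ℕ) : SimpleGraph (Fin m × Fin n) where
  Adj x y := x.1 = y.1 ∧ (cycleGraph n).Adj x.2 y.2
  symm := ⟨by rintro ⟨i, a⟩ ⟨j, b⟩ ⟨h1, h2⟩; exact ⟨h1.symm, h2.symm⟩⟩
  loopless := ⟨by rintro ⟨i, a⟩ ⟨_, h⟩; exact (cycleGraph n).irrefl h⟩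

/-- The multicone graph `K_w ∇ m·Cₙ`. -/
def multicone (w m n : ℕ) : SimpleGraph (Fin w ⊕ (Fin m × Fin n)) :=
  graphJoin (completeGraph (Fin w)) (mCycles m n)

section SpecAux

variable {V : Type*} [Fintype V] [DecidableEq V]

private lemma adjCharpoly_eq (G : SimpleGraph V) [DecidableRel G.Adj] :
    adjCharpoly G = (G.adjMatrix ℝ).charpoly := by
  unfold adjCharpoly
  congr!

private lemma charpoly_eval_eq (M : Matrix V V ℝ) (μ : ℝ) :
    M.charpoly.eval μ = (μ • (1 : Matrix V V ℝ) - M).det := by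
  have h := RingHom.map_det (Polynomial.evalRingHom μ) (Matrix.charmatrix M)
  rw [Matrix.charpoly]
  rw [show Polynomial.eval μ (Matrix.charmatrix M).det
      = (Polynomial.evalRingHom μ) (Matrix.charmatrix M).det from rfl, h]
  congr 1
  ext i j
  by_cases hij : i = j <;>
    simp [hij, Matrix.charmatrix_apply, Matrix.one_apply, Matrix.smul_apply, Matrix.sub_apply]

private lemma root_iff_eig (G : SimpleGraph V) [DecidableRel G.Adj] (μ : ℝ) :
    μ ∈ (G.adjMatrix ℝ).charpoly.roots ↔
      ∃ x : V → ℝ, x ≠ 0 ∧ (G.adjMatrix ℝ) *ᵥ x = μ • x := by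
  rw [Polynomial.mem_roots ((G.adjMatrix ℝ).charpoly_monic.ne_zero), Polynomial.IsRoot,
    charpoly_eval_eq, ← Matrix.exists_mulVec_eq_zero_iff]
  constructor
  · rintro ⟨v, hv, h⟩
    refine ⟨v, hv, ?_⟩
    have h' : μ • v - (G.adjMatrix ℝ) *ᵥ v = 0 := by
      simpa [Matrix.sub_mulVec, Matrix.smul_mulVec, Matrix.one_mulVec] using h
    exact (sub_eq_zero.mp h').symm
  · rintro ⟨v, hv, h⟩
    refine ⟨v, hv, ?_⟩
    simp [Matrix.sub_mulVec, Matrix.smul_mulVec, Matrix.one_mulVec, h]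

private lemma exists_nonneg_eigenvector (G : SimpleGraph V) [Nonempty V] [DecidableRel G.Adj] :
    ∃ x : V → ℝ, (∀ v, 0 ≤ x v) ∧ x ≠ 0 ∧
      (G.adjMatrix ℝ) *ᵥ x = specRadius G • x := by
  classical
  set A := G.adjMatrix ℝ with hAdef
  have hA : A.IsHermitian := by
    ext i j
    simp [hAdef, Matrix.conjTranspose_apply, SimpleGraph.adj_comm]
  set T : EuclideanSpace ℝ V →L[ℝ] EuclideanSpace ℝ V :=
    LinearMap.toContinuousLinearMap (Matrix.toEuclideanLin A) with hTdef
  have hTlin : (T : EuclideanSpace ℝ V →ₗ[ℝ] EuclideanSpace ℝ V) = Matrix.toEuclideanLin A :=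
    LinearMap.coe_toContinuousLinearMap _
  have hT : IsSelfAdjoint T := by
    rw [ContinuousLinearMap.isSelfAdjoint_iff_isSymmetric, hTlin]
    exact Matrix.isHermitian_iff_isSymmetric.mp hA
  set e := WithLp.equiv 2 (V → ℝ) with hedef
  -- formula for the Rayleigh numerator
  have hfT : ∀ z : EuclideanSpace ℝ V, T.reApplyInnerSelf z = (A *ᵥ (e z)) ⬝ᵥ (e z) := by
    intro z
    rw [ContinuousLinearMap.reApplyInnerSelf_apply]
    have hz : T z = Matrix.toEuclideanLin A z := by
      rw [hTdef]; rfl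
    rw [hz]
    simp [PiLp.inner_apply, Matrix.toEuclideanLin_apply, dotProduct, mul_comm]
    rw [hedef]
    exact Finset.sum_congr rfl fun _ _ => mul_comm _ _
  -- comparison of quadratic forms with absolute values
  have hq : ∀ w : V → ℝ, (A *ᵥ w) ⬝ᵥ w ≤ (A *ᵥ (fun u => |w u|)) ⬝ᵥ (fun u => |w u|) := by
    intro w
    simp only [dotProduct, hAdef, SimpleGraph.adjMatrix_mulVec_apply]
    refine Finset.sum_le_sum fun v _ => ?_
    rw [Finset.sum_mul, Finset.sum_mul]
    refine Finset.sum_le_sum fun u _ => ?_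
    calc w u * w v ≤ |w u * w v| := le_abs_self _
    _ = |w u| * |w v| := abs_mul _ _
  -- pick a maximizer of the Rayleigh quotient on a sphere
  obtain ⟨v₀⟩ := ‹Nonempty V›
  set x : EuclideanSpace ℝ V := e.symm (Pi.single v₀ (1:ℝ)) with hxdef
  have hxne : x ≠ 0 := by
    intro h
    have h2 : e x = e 0 := by rw [h]
    rw [hxdef, Equiv.apply_symm_apply] at h2
    have := congrFun h2 v₀
    simp [hedef, (show WithLp.equiv 2 (V → ℝ) 0 = 0 from rfl)] at this
  set r := ‖x‖ with hrdef
  have hr : 0 < r := by simpa [hrdef] using norm_pos_iff.mpr hxne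
  obtain ⟨x₀, hx₀mem, hmax⟩ := (isCompact_sphere (0 : EuclideanSpace ℝ V) r).exists_isMaxOn
    ⟨x, by simp [hrdef]⟩ T.reApplyInnerSelf_continuous.continuousOn
  have hx₀norm : ‖x₀‖ = r := by simpa using hx₀mem
  -- the entrywise absolute value of the maximizer
  set y : EuclideanSpace ℝ V := e.symm (fun v => |e x₀ v|) with hydef
  have hey : e y = fun v => |e x₀ v| := by rw [hydef, Equiv.apply_symm_apply]
  have hynorm : ‖y‖ = ‖x₀‖ := by
    rw [EuclideanSpace.norm_eq, EuclideanSpace.norm_eq]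
    congr 1
    refine Finset.sum_congr rfl fun v _ => ?_
    have : y v = |e x₀ v| := congrFun hey v
    rw [this]
    simp [Real.norm_eq_abs, abs_abs]
    rfl
  have hymem : y ∈ Metric.sphere (0 : EuclideanSpace ℝ V) r := by
    simp [hynorm, hx₀norm]
  have hyne : y ≠ 0 := by
    intro h
    rw [h, norm_zero] at hynorm
    rw [← hynorm] at hx₀norm
    exact absurd hx₀norm.symm (ne_of_gt hr)
  have hmaxy : IsMaxOn T.reApplyInnerSelf (Metric.sphere (0 : EuclideanSpace ℝ V) ‖y‖) y := by
    rw [hynorm, hx₀norm]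
    intro z hz
    have h1 : T.reApplyInnerSelf z ≤ T.reApplyInnerSelf x₀ := hmax hz
    have h2 : T.reApplyInnerSelf x₀ ≤ T.reApplyInnerSelf y := by
      rw [hfT, hfT, hey]
      exact hq (e x₀)
    exact le_trans h1 h2
  have hEig := hT.hasEigenvector_of_isMaxOn hyne hmaxy
  set lam : ℝ := ⨆ z : { z : EuclideanSpace ℝ V // z ≠ 0 }, T.rayleighQuotient z with hlam
  have happ : Matrix.toEuclideanLin A y = lam • y := by
    have := hEig.apply_eq_smul
    rwa [hTlin] at this
  have hAy : A *ᵥ (e y) = lam • (e y) := by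
    have := congrArg e happ
    rw [hedef] at this ⊢
    rw [(show ∀ x, WithLp.equiv 2 (V → ℝ) (Matrix.toEuclideanLin A x) = Matrix.toLin' A (WithLp.equiv 2 (V → ℝ) x) from fun _ => rfl)] at this
    rw [show Matrix.toLin' A ((WithLp.equiv 2 (V → ℝ)) y) = A *ᵥ ((WithLp.equiv 2 (V → ℝ)) y)
      from Matrix.toLin'_apply A _] at this
    rw [this, (show ∀ (c : ℝ) (x : EuclideanSpace ℝ V), WithLp.equiv 2 (V → ℝ) (c • x) = c • WithLp.equiv 2 (V → ℝ) x from fun _ _ => rfl)]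
  have heyne : e y ≠ 0 := by
    intro h
    apply hyne
    have := congrArg e.symm h
    rwa [Equiv.symm_apply_apply, hedef, (show (WithLp.equiv 2 (V → ℝ)).symm 0 = 0 from rfl)] at this
  -- identify lam with the spectral radius
  have hSpec : {z : ℝ | z ∈ adjSpectrum G} = {z : ℝ | z ∈ A.charpoly.roots} := by
    unfold adjSpectrum
    rw [adjCharpoly_eq]
  have hfin : {z : ℝ | z ∈ A.charpoly.roots}.Finite := A.charpoly.roots.finite_toSet
  have hlammem : lam ∈ {z : ℝ | z ∈ A.charpoly.roots} := by
    exact (root_iff_eig G lam).mpr ⟨e y, heyne, hAy⟩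
  have hroot_le : ∀ z ∈ {z : ℝ | z ∈ A.charpoly.roots}, z ≤ lam := by
    intro z hz
    obtain ⟨w, hw0, hww⟩ := (root_iff_eig G z).mp hz
    set wF : EuclideanSpace ℝ V := e.symm w with hwFdef
    have hewF : e wF = w := by rw [hwFdef, Equiv.apply_symm_apply]
    have hwFne : wF ≠ 0 := by
      intro h
      apply hw0
      rw [← hewF, h, hedef, (show WithLp.equiv 2 (V → ℝ) 0 = 0 from rfl)]
    have hwFnorm : 0 < ‖wF‖ := norm_pos_iff.mpr hwFne
    set c : ℝ := r / ‖wF‖ with hcdef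
    have hc : 0 < c := div_pos hr hwFnorm
    have hz' : (c • wF) ∈ Metric.sphere (0 : EuclideanSpace ℝ V) ‖y‖ := by
      rw [mem_sphere_zero_iff_norm, hynorm, hx₀norm, norm_smul, Real.norm_eq_abs,
        abs_of_pos hc, hcdef]
      field_simp
    have hle : T.reApplyInnerSelf (c • wF) ≤ T.reApplyInnerSelf y := hmaxy hz'
    -- compute both sides
    have hecw : e (c • wF) = c • w := by
      rw [hedef, (show ∀ (c : ℝ) (x : EuclideanSpace ℝ V), WithLp.equiv 2 (V → ℝ) (c • x) = c • WithLp.equiv 2 (V → ℝ) x from fun _ _ => rfl), ← hedef, hewF]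
    have hfy : T.reApplyInnerSelf y = lam * ((e y) ⬝ᵥ (e y)) := by
      rw [hfT, hAy]
      simp [dotProduct, Finset.mul_sum, mul_assoc]
    have hfz : T.reApplyInnerSelf (c • wF) = c ^ 2 * (z * (w ⬝ᵥ w)) := by
      rw [hfT, hecw, Matrix.mulVec_smul, hww]
      simp only [smul_dotProduct, dotProduct_smul, smul_eq_mul]
      ring
    -- norms as dot products
    have hwdot : w ⬝ᵥ w = ‖wF‖ ^ 2 := by
      rw [← real_inner_self_eq_norm_sq]
      rw [show (inner ℝ wF wF : ℝ) = ∑ v, e wF v * e wF v from ?_]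
      · rw [hewF]; rfl
      · rw [PiLp.inner_apply]
        rfl
    have hydot : (e y) ⬝ᵥ (e y) = r ^ 2 := by
      have : (e y) ⬝ᵥ (e y) = ‖y‖ ^ 2 := by
        rw [← real_inner_self_eq_norm_sq]
        rw [PiLp.inner_apply]
        rfl
      rw [this, hynorm, hx₀norm]
    rw [hfy, hfz, hwdot, hydot] at hle
    have hr2 : c ^ 2 * ‖wF‖ ^ 2 = r ^ 2 := by
      rw [hcdef]
      field_simp
    have : z * r ^ 2 ≤ lam * r ^ 2 := by
      have heq : z * r ^ 2 = c ^ 2 * (z * ‖wF‖ ^ 2) := by rw [← hr2]; ring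
      linarith [hle]
    have hrr : 0 < r ^ 2 := by positivity
    exact le_of_mul_le_mul_right this hrr
  have hspecrad : specRadius G = lam := by
    unfold specRadius
    rw [hSpec]
    refine le_antisymm ?_ ?_
    · exact csSup_le ⟨lam, hlammem⟩ hroot_le
    · exact le_csSup hfin.bddAbove hlammem
  refine ⟨e y, fun v => ?_, heyne, by rw [hspecrad]; exact hAy⟩
  rw [hey]
  exact abs_nonneg _

private lemma sum_mulVec (G : SimpleGraph V) [DecidableRel G.Adj] (z : V → ℝ) :
    ∑ v, ((G.adjMatrix ℝ) *ᵥ z) v = ∑ u, (G.degree u : ℝ) * z u := by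
  calc ∑ v, ((G.adjMatrix ℝ) *ᵥ z) v
      = ∑ v, ∑ u, if G.Adj v u then z u else 0 := by
        refine Finset.sum_congr rfl fun v _ => ?_
        rw [SimpleGraph.adjMatrix_mulVec_apply, SimpleGraph.neighborFinset_eq_filter,
          Finset.sum_filter]
    _ = ∑ u, ∑ v, if G.Adj v u then z u else 0 := Finset.sum_comm
    _ = ∑ u, (G.degree u : ℝ) * z u := by
        refine Finset.sum_congr rfl fun u _ => ?_
        rw [← Finset.sum_filter]
        have hfil : Finset.filter (fun v => G.Adj v u) Finset.univ = G.neighborFinset u := by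
          ext v
          simp only [Finset.mem_filter, Finset.mem_univ, true_and,
            SimpleGraph.mem_neighborFinset]
          exact G.adj_comm v u
        rw [hfil, Finset.sum_const, nsmul_eq_mul]
        rfl

private lemma swap_deg (G : SimpleGraph V) [DecidableRel G.Adj] (x : V → ℝ) :
    ∑ u, (G.degree u : ℝ) * (((G.adjMatrix ℝ) *ᵥ x) u)
      = ∑ t, (∑ u ∈ G.neighborFinset t, (G.degree u : ℝ)) * x t := by
  calc ∑ u, (G.degree u : ℝ) * ((G.adjMatrix ℝ *ᵥ x) u)
      = ∑ u, ∑ t, if G.Adj u t then (G.degree u : ℝ) * x t else 0 := by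
        refine Finset.sum_congr rfl fun u _ => ?_
        rw [SimpleGraph.adjMatrix_mulVec_apply, SimpleGraph.neighborFinset_eq_filter,
          Finset.sum_filter, Finset.mul_sum]
        exact Finset.sum_congr rfl fun t _ => by rw [mul_ite, mul_zero]
    _ = ∑ t, ∑ u, if G.Adj u t then (G.degree u : ℝ) * x t else 0 := Finset.sum_comm
    _ = ∑ t, (∑ u ∈ G.neighborFinset t, (G.degree u : ℝ)) * x t := by
        refine Finset.sum_congr rfl fun t _ => ?_
        rw [← Finset.sum_filter]
        have hfil : Finset.filter (fun u => G.Adj u t) Finset.univ = G.neighborFinset t := by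
          ext u
          simp only [Finset.mem_filter, Finset.mem_univ, true_and,
            SimpleGraph.mem_neighborFinset]
          exact G.adj_comm u t
        rw [hfil, Finset.sum_mul]

private lemma deg_sum_bound (G : SimpleGraph V) [Nonempty V] [DecidableRel G.Adj] (t : V) :
    ∑ u ∈ G.neighborFinset t, (G.degree u : ℝ)
      ≤ (2 * (G.edgeFinset.card : ℝ) - ((Fintype.card V : ℝ) - 1) * (G.minDegree : ℝ))
        + ((G.minDegree : ℝ) - 1) * (G.degree t : ℝ) := by
  classical
  have htot : ∑ u, (G.degree u : ℝ) = 2 * (G.edgeFinset.card : ℝ) := by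
    have h := G.sum_degrees_eq_twice_card_edges
    exact_mod_cast congrArg (Nat.cast : ℕ → ℝ) h
  have hnotmem : t ∉ G.neighborFinset t := by simp
  set s : Finset V := insert t (G.neighborFinset t) with hs
  have hsub : s ⊆ Finset.univ := Finset.subset_univ s
  have hcards : s.card = G.degree t + 1 := by
    rw [hs, Finset.card_insert_of_notMem hnotmem]
    rfl
  have hsplit : ∑ u ∈ Finset.univ \ s, (G.degree u : ℝ) + ∑ u ∈ s, (G.degree u : ℝ)
      = ∑ u, (G.degree u : ℝ) := Finset.sum_sdiff hsub
  have hins : ∑ u ∈ s, (G.degree u : ℝ)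
      = (G.degree t : ℝ) + ∑ u ∈ G.neighborFinset t, (G.degree u : ℝ) := by
    rw [hs, Finset.sum_insert hnotmem]
  have hlow : (((Finset.univ \ s).card : ℝ)) * (G.minDegree : ℝ)
      ≤ ∑ u ∈ Finset.univ \ s, (G.degree u : ℝ) := by
    calc (((Finset.univ \ s).card : ℝ)) * (G.minDegree : ℝ)
        = ∑ _u ∈ Finset.univ \ s, (G.minDegree : ℝ) := by
          rw [Finset.sum_const, nsmul_eq_mul]
      _ ≤ _ := Finset.sum_le_sum fun u _ => by
          exact_mod_cast G.minDegree_le_degree u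
  have hlt : G.degree t + 1 ≤ Fintype.card V := G.degree_lt_card_verts t
  have hcard2 : (((Finset.univ \ s).card : ℝ))
      = (Fintype.card V : ℝ) - ((G.degree t : ℝ) + 1) := by
    rw [Finset.card_sdiff_of_subset hsub, Finset.card_univ, hcards, Nat.cast_sub hlt]
    push_cast
    ring
  rw [hcard2] at hlow
  nlinarith [hlow, hsplit, hins, htot]

end SpecAux

/-- For a connected graph `G` with `n` vertices, `m` edges and minimum degree `δ`,
`ϱ(G) ≤ (δ-1)/2 + √(2m - nδ + (δ+1)²/4)`. -/
theorem specRadius_le {V : Type*} [Fintype V] [Nonempty V] [DecidableEq V]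
    (G : SimpleGraph V) [DecidableRel G.Adj] (hG : G.Connected) :
    specRadius G ≤ ((G.minDegree : ℝ) - 1) / 2 +
      Real.sqrt (2 * G.edgeFinset.card - Fintype.card V * G.minDegree +
        ((G.minDegree : ℝ) + 1) ^ 2 / 4) := by
  classical
  obtain ⟨x, hxnn, hxne, heig⟩ := exists_nonneg_eigenvector G
  set μ := specRadius G with hmu
  set δ : ℝ := (G.minDegree : ℝ) with hd
  set n : ℝ := (Fintype.card V : ℝ) with hn
  set m : ℝ := (G.edgeFinset.card : ℝ) with hm
  set S := ∑ v, x v with hS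
  have hSpos : 0 < S := by
    obtain ⟨v, hv⟩ := Function.ne_iff.mp hxne
    have hv' : x v ≠ 0 := by simpa using hv
    have hxv : 0 < x v := lt_of_le_of_ne (hxnn v) (Ne.symm hv')
    have hle := Finset.single_le_sum (f := x) (fun i _ => hxnn i) (Finset.mem_univ v)
    rw [hS]
    linarith
  have hAx : ∑ v, ((G.adjMatrix ℝ) *ᵥ x) v = μ * S := by
    rw [heig]
    simp only [Pi.smul_apply, smul_eq_mul]
    rw [hS, Finset.mul_sum]
  have h2 : ∑ u, (G.degree u : ℝ) * x u = μ * S := (sum_mulVec G x).symm.trans hAx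
  have h3 : ∑ t, (∑ u ∈ G.neighborFinset t, (G.degree u : ℝ)) * x t = μ * (μ * S) := by
    rw [← swap_deg G x, heig]
    simp only [Pi.smul_apply, smul_eq_mul]
    have hh : ∑ u, (G.degree u : ℝ) * (μ * x u) = μ * ∑ u, (G.degree u : ℝ) * x u := by
      rw [Finset.mul_sum]
      exact Finset.sum_congr rfl fun u _ => by ring
    rw [hh, h2]
  have h4 : μ * (μ * S) ≤ ((2 * m - (n - 1) * δ) + (δ - 1) * μ) * S := by
    rw [← h3]
    calc ∑ t, (∑ u ∈ G.neighborFinset t, (G.degree u : ℝ)) * x t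
        ≤ ∑ t, ((2 * m - (n - 1) * δ) + (δ - 1) * (G.degree t : ℝ)) * x t :=
          Finset.sum_le_sum fun t _ =>
            mul_le_mul_of_nonneg_right (deg_sum_bound G t) (hxnn t)
      _ = (2 * m - (n - 1) * δ) * S + (δ - 1) * ∑ t, (G.degree t : ℝ) * x t := by
          simp only [add_mul, Finset.sum_add_distrib, mul_assoc, ← Finset.mul_sum]
          rfl
      _ = ((2 * m - (n - 1) * δ) + (δ - 1) * μ) * S := by
          rw [h2]
          ring
  have h6 : μ ^ 2 ≤ (2 * m - (n - 1) * δ) + (δ - 1) * μ := by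
    have h' : (μ ^ 2) * S ≤ ((2 * m - (n - 1) * δ) + (δ - 1) * μ) * S := by
      have : μ * (μ * S) = (μ ^ 2) * S := by ring
      linarith [h4]
    exact le_of_mul_le_mul_right h' hSpos
  have hR : (μ - (δ - 1) / 2) ^ 2 ≤ 2 * m - n * δ + (δ + 1) ^ 2 / 4 := by nlinarith [h6]
  have h7 : μ - (δ - 1) / 2 ≤ Real.sqrt (2 * m - n * δ + (δ + 1) ^ 2 / 4) := by
    calc μ - (δ - 1) / 2 ≤ |μ - (δ - 1) / 2| := le_abs_self _
      _ = Real.sqrt ((μ - (δ - 1) / 2) ^ 2) := (Real.sqrt_sq_eq_abs _).symm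
      _ ≤ _ := Real.sqrt_le_sqrt hR
  linarith
end

section
/- Let Γ be a connected non-regular graph with exactly three distinct adjacency eigenvalues θ₀ > θ₁ > θ₂. Then θ₁ ≥ 0, with equality if and only if Γ is complete bipartite. -/
open SimpleGraph Matrix Polynomial Real

lemma charpoly_diagonal' {V : Type*} [Fintype V] [DecidableEq V] (d : V → ℝ) :
    (Matrix.diagonal d).charpoly = ∏ i, (X - C (d i)) := by
  have h : charmatrix (Matrix.diagonal d) = Matrix.diagonal (fun i => (X : ℝ[X]) - C (d i)) := by
    ext i j
    by_cases h : i = j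
    · subst h; simp
    · simp [h, Matrix.diagonal_apply_ne _ h]
  rw [Matrix.charpoly, h, Matrix.det_diagonal]

lemma spec_decomp {V : Type*} [Fintype V] [DecidableEq V] (A : Matrix V V ℝ)
    (hA : A.IsHermitian) :
    ∃ (μ : V → ℝ) (s : V → V → ℝ),
      (∀ i, A *ᵥ s i = μ i • s i) ∧
      (∀ i j, s i ⬝ᵥ s j = if i = j then 1 else 0) ∧
      (∀ u v, (∑ i, s i u * s i v) = if u = v then (1:ℝ) else 0) ∧
      (∀ u v, A u v = ∑ i, μ i * s i u * s i v) ∧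
      A.charpoly.roots = Multiset.map μ Finset.univ.val ∧
      A.trace = ∑ i, μ i ∧
      A.det = ∏ i, μ i := by
  classical
  set S : Matrix V V ℝ := (hA.eigenvectorUnitary : Matrix V V ℝ) with hS
  set μ := hA.eigenvalues with hμ
  have hst : star S = Sᵀ := by
    ext i j; simp [Matrix.conjTranspose_apply]
  have h1 : Sᵀ * S = 1 := by
    rw [← hst]; exact (Matrix.mem_unitaryGroup_iff').mp hA.eigenvectorUnitary.2
  have h2 : S * Sᵀ = 1 := by
    rw [← hst]; exact (Matrix.mem_unitaryGroup_iff).mp hA.eigenvectorUnitary.2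
  have hdecomp : A = S * Matrix.diagonal μ * Sᵀ := by
    rw [← hst]
    have := hA.spectral_theorem
    simpa using this
  have hAS : A * S = S * Matrix.diagonal μ := by
    rw [hdecomp, Matrix.mul_assoc, Matrix.mul_assoc, h1, Matrix.mul_one]
  refine ⟨μ, fun i v => S v i, ?_, ?_, ?_, ?_, ?_, ?_, ?_⟩
  · intro i
    funext v
    have := congrFun (congrFun hAS v) i
    rw [Matrix.mul_apply, Matrix.mul_diagonal] at this
    simpa [Matrix.mulVec, dotProduct, mul_comm] using this
  · intro i j
    have := congrFun (congrFun h1 i) j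
    simp only [Matrix.mul_apply, Matrix.transpose_apply, Matrix.one_apply] at this
    simpa [dotProduct] using this
  · intro u v
    have := congrFun (congrFun h2 u) v
    simp only [Matrix.mul_apply, Matrix.transpose_apply, Matrix.one_apply] at this
    simpa using this
  · intro u v
    rw [hdecomp, Matrix.mul_apply]
    simp only [Matrix.mul_diagonal, Matrix.transpose_apply]
    apply Finset.sum_congr rfl
    intro i _
    ring
  · have hmap : ∀ (M N : Matrix V V ℝ), (M * N).map (C : ℝ →+* ℝ[X]) = M.map C * N.map C := by
      intro M N; exact Matrix.map_mul
    have hSC : S.map (C : ℝ →+* ℝ[X]) * Sᵀ.map (C : ℝ →+* ℝ[X]) = 1 := by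
      rw [← hmap, h2]; ext i j; by_cases h : i = j <;> simp [h, Matrix.one_apply]
    have hscal : S.map (C : ℝ →+* ℝ[X]) * (Matrix.scalar V (X : ℝ[X])) * Sᵀ.map C
        = Matrix.scalar V (X : ℝ[X]) := by
      rw [← (Matrix.scalar_commute (X : ℝ[X]) (fun r => Commute.all _ _)
        (S.map (C : ℝ →+* ℝ[X]))).eq, Matrix.mul_assoc, hSC, Matrix.mul_one]
    have hchar : charmatrix A =
        S.map (C : ℝ →+* ℝ[X]) * charmatrix (Matrix.diagonal μ) * Sᵀ.map (C : ℝ →+* ℝ[X]) := by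
      rw [charmatrix, charmatrix, RingHom.mapMatrix_apply, RingHom.mapMatrix_apply,
        Matrix.mul_sub, Matrix.sub_mul, hscal, hdecomp, hmap, hmap]
    have hcp : A.charpoly = (Matrix.diagonal μ).charpoly := by
      rw [Matrix.charpoly, Matrix.charpoly, hchar, Matrix.det_mul, Matrix.det_mul,
        mul_right_comm, ← Matrix.det_mul, hSC, Matrix.det_one, one_mul]
    rw [hcp, charpoly_diagonal']
    have : (∏ i, ((X : ℝ[X]) - C (μ i))) =
        ((Finset.univ.val.map μ).map fun a => (X : ℝ[X]) - C a).prod := by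
      rw [Multiset.map_map]
      rfl
    rw [this, Polynomial.roots_multiset_prod_X_sub_C]
  · rw [hdecomp, Matrix.trace_mul_comm, ← Matrix.mul_assoc, h1, Matrix.one_mul,
      Matrix.trace_diagonal]
  · rw [hdecomp, Matrix.det_mul, Matrix.det_mul, mul_right_comm, ← Matrix.det_mul, h2,
      Matrix.det_one, one_mul, Matrix.det_diagonal]

lemma perron_adj {V : Type*} [Fintype V] [DecidableEq V] (G : SimpleGraph V)
    [DecidableRel G.Adj] (hc : G.Connected) (θ₀ : ℝ)
    (hRay : ∀ x : V → ℝ, x ⬝ᵥ ((G.adjMatrix ℝ) *ᵥ x) ≤ θ₀ * (x ⬝ᵥ x))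
    (hEq : ∀ x : V → ℝ, x ⬝ᵥ ((G.adjMatrix ℝ) *ᵥ x) = θ₀ * (x ⬝ᵥ x) →
      (G.adjMatrix ℝ) *ᵥ x = θ₀ • x)
    (hex : ∃ x : V → ℝ, x ≠ 0 ∧ (G.adjMatrix ℝ) *ᵥ x = θ₀ • x) :
    ∃ w : V → ℝ, (∀ v, 0 < w v) ∧ (G.adjMatrix ℝ) *ᵥ w = θ₀ • w ∧
      ∀ x : V → ℝ, (G.adjMatrix ℝ) *ᵥ x = θ₀ • x → ∃ c : ℝ, x = c • w := by
  classical
  set A := G.adjMatrix ℝ with hAdef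
  have hA_nonneg : ∀ u v, 0 ≤ A u v := by
    intro u v; rw [hAdef]; simp only [SimpleGraph.adjMatrix_apply]
    split <;> norm_num
  have hquad : ∀ x : V → ℝ, x ⬝ᵥ (A *ᵥ x) = ∑ v, ∑ u, x v * (A v u * x u) := by
    intro x
    simp only [dotProduct, Matrix.mulVec, Finset.mul_sum]
  have habs : ∀ x : V → ℝ, A *ᵥ x = θ₀ • x →
      A *ᵥ (fun v => |x v|) = θ₀ • (fun v => |x v|) := by
    intro x hx
    apply hEq
    have h1 : (fun v => |x v|) ⬝ᵥ ((fun v => |x v|) : V → ℝ) = x ⬝ᵥ x := by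
      simp [dotProduct, abs_mul_abs_self]
    have h2 : x ⬝ᵥ (A *ᵥ x) = θ₀ * (x ⬝ᵥ x) := by
      rw [hx, dotProduct_smul, smul_eq_mul]
    have h3 : x ⬝ᵥ (A *ᵥ x) ≤ (fun v => |x v|) ⬝ᵥ (A *ᵥ fun v => |x v|) := by
      rw [hquad, hquad]
      apply Finset.sum_le_sum
      intro v _
      apply Finset.sum_le_sum
      intro u _
      calc x v * (A v u * x u) ≤ |x v * (A v u * x u)| := le_abs_self _
        _ = |x v| * (A v u * |x u|) := by
            rw [abs_mul, abs_mul, abs_of_nonneg (hA_nonneg v u)]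
        _ = |x v| * (A v u * |x u|) := rfl
    have h4 := hRay (fun v => |x v|)
    rw [h1] at h4 ⊢
    linarith [h2, h3]
  have hzero : ∀ y : V → ℝ, A *ᵥ y = θ₀ • y → (∀ v, 0 ≤ y v) →
      ∀ u v, G.Adj u v → y u = 0 → y v = 0 := by
    intro y hy hpos u v hadj hu
    have h1 : (A *ᵥ y) u = 0 := by rw [hy]; simp [hu]
    rw [Matrix.mulVec, dotProduct] at h1
    have h2 : ∀ t ∈ Finset.univ, 0 ≤ A u t * y t :=
      fun t _ => mul_nonneg (hA_nonneg u t) (hpos t)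
    have h3 := (Finset.sum_eq_zero_iff_of_nonneg h2).mp h1 v (Finset.mem_univ v)
    rw [hAdef] at h3
    simpa [hadj] using h3
  have hprop : ∀ y : V → ℝ, A *ᵥ y = θ₀ • y → (∀ v, 0 ≤ y v) →
      ∀ a b, y a = 0 → y b = 0 := by
    intro y hy hpos a b ha
    obtain ⟨p⟩ := hc.preconnected a b
    induction p with
    | nil => exact ha
    | cons h q ih => exact ih (hzero y hy hpos _ _ h ha)
  obtain ⟨x₀, hx₀ne, hx₀⟩ := hex
  set w : V → ℝ := fun v => |x₀ v| with hwdef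
  have hw_eig : A *ᵥ w = θ₀ • w := habs x₀ hx₀
  have hw_nonneg : ∀ v, 0 ≤ w v := fun v => abs_nonneg _
  have hw_pos : ∀ v, 0 < w v := by
    intro v
    rcases lt_or_eq_of_le (hw_nonneg v) with h | h
    · exact h
    · exfalso
      apply hx₀ne
      funext b
      have := hprop w hw_eig hw_nonneg v b h.symm
      rw [hwdef] at this
      simpa using this
  refine ⟨w, hw_pos, hw_eig, ?_⟩
  intro x hx
  have : Nonempty V := hc.nonempty
  set u₀ := Classical.arbitrary V
  set c := x u₀ / w u₀ with hcdef
  refine ⟨c, ?_⟩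
  set z : V → ℝ := x - c • w with hzdef
  have hz_eig : A *ᵥ z = θ₀ • z := by
    rw [hzdef, Matrix.mulVec_sub, Matrix.mulVec_smul, hx, hw_eig, smul_sub, smul_comm]
  have hz0 : z u₀ = 0 := by
    rw [hzdef]
    simp only [Pi.sub_apply, Pi.smul_apply, smul_eq_mul, hcdef]
    field_simp [(hw_pos u₀).ne']
    ring
  have habsz := habs z hz_eig
  have : ∀ b, |z b| = 0 := by
    intro b
    exact hprop (fun v => |z v|) habsz (fun v => abs_nonneg _) u₀ b (by simp [hz0])
  have hz : z = 0 := by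
    funext b
    exact abs_eq_zero.mp (this b)
  rw [hzdef] at hz
  have := sub_eq_zero.mp hz
  rw [this]


/-- For a connected non-regular graph with exactly three distinct adjacency eigenvalues
`θ₀ > θ₁ > θ₂`, we have `θ₁ ≥ 0`, with equality iff the graph is complete bipartite. -/
theorem three_eigenvalues_middle_nonneg {V : Type*} [Fintype V]
    (G : SimpleGraph V) [DecidableRel G.Adj] (θ₀ θ₁ θ₂ : ℝ) (hc : G.Connected)
    (hnreg : ¬ ∃ d : ℕ, G.IsRegularOfDegree d)
    (h01 : θ₀ > θ₁) (h12 : θ₁ > θ₂)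
    (hspec : {x : ℝ | x ∈ adjSpectrum G} = {θ₀, θ₁, θ₂}) :
    0 ≤ θ₁ ∧ (θ₁ = 0 ↔ ∃ s : Set V, ∀ u v : V, G.Adj u v ↔ ¬ (u ∈ s ↔ v ∈ s)) := by
  classical
  set A := G.adjMatrix ℝ with hAdef
  have hA : A.IsHermitian := by
    ext i j
    simp [hAdef, Matrix.conjTranspose_apply, G.adj_comm]
  obtain ⟨μ, s, heig, horth, hcomp, hent, hroots, htr, hdet⟩ := spec_decomp A hA
  have hspecroots : adjSpectrum G = Multiset.map μ Finset.univ.val := by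
    rw [← hroots]
    unfold adjSpectrum adjCharpoly
    congr!
  have hmemset : ∀ x : ℝ, x ∈ adjSpectrum G ↔ ∃ i, μ i = x := by
    intro x
    rw [hspecroots]
    simp [Multiset.mem_map]
  have hmem : ∀ i, μ i = θ₀ ∨ μ i = θ₁ ∨ μ i = θ₂ := by
    intro i
    have h : μ i ∈ {x : ℝ | x ∈ adjSpectrum G} := (hmemset (μ i)).mpr ⟨i, rfl⟩
    rw [hspec] at h
    simpa using h
  have hexθ : ∀ θ : ℝ, θ ∈ ({θ₀, θ₁, θ₂} : Set ℝ) → ∃ i, μ i = θ := by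
    intro θ hθ
    rw [← hspec] at hθ
    exact (hmemset θ).mp hθ
  obtain ⟨i₀, hi₀⟩ := hexθ θ₀ (by simp)
  obtain ⟨i₁, hi₁⟩ := hexθ θ₁ (by simp)
  obtain ⟨i₂, hi₂⟩ := hexθ θ₂ (by simp)
  have htr0 : ∑ i, μ i = 0 := by
    rw [← htr, hAdef, SimpleGraph.trace_adjMatrix]
  have hθ₀pos : 0 < θ₀ := by
    by_contra h
    push_neg at h
    have hall : ∀ i ∈ Finset.univ, μ i ≤ 0 := by
      intro i _
      rcases hmem i with h' | h' | h' <;> rw [h'] <;> linarith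
    have h2 := (Finset.sum_eq_zero_iff_of_nonpos hall).mp htr0 i₂ (Finset.mem_univ _)
    rw [hi₂] at h2; linarith
  have hθ₂neg : θ₂ < 0 := by
    by_contra h
    push_neg at h
    have hall : ∀ i ∈ Finset.univ, 0 ≤ μ i := by
      intro i _
      rcases hmem i with h' | h' | h' <;> rw [h'] <;> linarith
    have h2 := (Finset.sum_eq_zero_iff_of_nonneg hall).mp htr0 i₀ (Finset.mem_univ _)
    rw [hi₀] at h2; linarith
  have hdiag : ∀ v, A v v = 0 := by intro v; simp [hAdef]
  have hsym : ∀ u v, A u v = A v u := by intro u v; simp [hAdef, G.adj_comm]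
  -- expansion machinery
  have hexp : ∀ (x : V → ℝ) (v : V), x v = ∑ i, (s i ⬝ᵥ x) * s i v := by
    intro x v
    have h1 : x v = ∑ u, (if v = u then (1:ℝ) else 0) * x u := by simp
    rw [h1]
    calc ∑ u, (if v = u then (1:ℝ) else 0) * x u
        = ∑ u, (∑ i, s i v * s i u) * x u := by
          apply Finset.sum_congr rfl; intro u _; rw [hcomp v u]
      _ = ∑ u, ∑ i, s i v * s i u * x u := by
          apply Finset.sum_congr rfl; intro u _; rw [Finset.sum_mul]
      _ = ∑ i, ∑ u, s i v * s i u * x u := Finset.sum_comm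
      _ = ∑ i, (s i ⬝ᵥ x) * s i v := by
          apply Finset.sum_congr rfl; intro i _
          rw [dotProduct, Finset.sum_mul]
          apply Finset.sum_congr rfl; intro u _; ring
  have hAx : ∀ (x : V → ℝ) (v : V), (A *ᵥ x) v = ∑ i, μ i * (s i ⬝ᵥ x) * s i v := by
    intro x v
    rw [Matrix.mulVec, dotProduct]
    calc ∑ u, A v u * x u = ∑ u, (∑ i, μ i * s i v * s i u) * x u := by
          apply Finset.sum_congr rfl; intro u _; rw [hent v u]
      _ = ∑ u, ∑ i, μ i * s i v * s i u * x u := by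
          apply Finset.sum_congr rfl; intro u _; rw [Finset.sum_mul]
      _ = ∑ i, ∑ u, μ i * s i v * s i u * x u := Finset.sum_comm
      _ = ∑ i, μ i * (s i ⬝ᵥ x) * s i v := by
          apply Finset.sum_congr rfl; intro i _
          rw [dotProduct, Finset.mul_sum, Finset.sum_mul]
          apply Finset.sum_congr rfl; intro u _; ring
  have hxAx : ∀ x : V → ℝ, x ⬝ᵥ (A *ᵥ x) = ∑ i, μ i * (s i ⬝ᵥ x)^2 := by
    intro x
    rw [dotProduct]
    calc ∑ v, x v * (A *ᵥ x) v = ∑ v, ∑ i, x v * (μ i * (s i ⬝ᵥ x) * s i v) := by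
          apply Finset.sum_congr rfl; intro v _; rw [hAx x v, Finset.mul_sum]
      _ = ∑ i, ∑ v, x v * (μ i * (s i ⬝ᵥ x) * s i v) := Finset.sum_comm
      _ = ∑ i, μ i * (s i ⬝ᵥ x)^2 := by
          apply Finset.sum_congr rfl; intro i _
          have h3 : ∑ v, x v * (μ i * (s i ⬝ᵥ x) * s i v)
              = (μ i * (s i ⬝ᵥ x)) * ∑ v, s i v * x v := by
            rw [Finset.mul_sum]; apply Finset.sum_congr rfl; intro v _; ring
          rw [h3]
          have h4 : ∑ v, s i v * x v = s i ⬝ᵥ x := rfl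
          rw [h4]; ring
  have hxx : ∀ x : V → ℝ, x ⬝ᵥ x = ∑ i, (s i ⬝ᵥ x)^2 := by
    intro x
    rw [dotProduct]
    calc ∑ v, x v * x v = ∑ v, x v * ∑ i, (s i ⬝ᵥ x) * s i v := by
          apply Finset.sum_congr rfl; intro v _; rw [← hexp x v]
      _ = ∑ v, ∑ i, x v * ((s i ⬝ᵥ x) * s i v) := by
          apply Finset.sum_congr rfl; intro v _; rw [Finset.mul_sum]
      _ = ∑ i, ∑ v, x v * ((s i ⬝ᵥ x) * s i v) := Finset.sum_comm
      _ = ∑ i, (s i ⬝ᵥ x)^2 := by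
          apply Finset.sum_congr rfl; intro i _
          have h3 : ∑ v, x v * ((s i ⬝ᵥ x) * s i v) = (s i ⬝ᵥ x) * ∑ v, s i v * x v := by
            rw [Finset.mul_sum]; apply Finset.sum_congr rfl; intro v _; ring
          rw [h3]
          have h4 : ∑ v, s i v * x v = s i ⬝ᵥ x := rfl
          rw [h4]; ring
  -- Rayleigh bound and equality case
  have hRay : ∀ x : V → ℝ, x ⬝ᵥ (A *ᵥ x) ≤ θ₀ * (x ⬝ᵥ x) := by
    intro x
    rw [hxAx, hxx, Finset.mul_sum]
    apply Finset.sum_le_sum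
    intro i _
    have h1 : μ i ≤ θ₀ := by rcases hmem i with h|h|h <;> rw [h] <;> linarith
    nlinarith [sq_nonneg (s i ⬝ᵥ x)]
  have hEqc : ∀ x : V → ℝ, x ⬝ᵥ (A *ᵥ x) = θ₀ * (x ⬝ᵥ x) → A *ᵥ x = θ₀ • x := by
    intro x hx
    rw [hxAx, hxx, Finset.mul_sum] at hx
    have hsum0 : ∑ i, (θ₀ * (s i ⬝ᵥ x)^2 - μ i * (s i ⬝ᵥ x)^2) = 0 := by
      rw [Finset.sum_sub_distrib, hx, sub_self]
    have hnn : ∀ i ∈ Finset.univ, (0:ℝ) ≤ θ₀ * (s i ⬝ᵥ x)^2 - μ i * (s i ⬝ᵥ x)^2 := by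
      intro i _
      have h1 : μ i ≤ θ₀ := by rcases hmem i with h|h|h <;> rw [h] <;> linarith
      nlinarith [sq_nonneg (s i ⬝ᵥ x)]
    have hterm := (Finset.sum_eq_zero_iff_of_nonneg hnn).mp hsum0
    have hkey : ∀ i, μ i * (s i ⬝ᵥ x) = θ₀ * (s i ⬝ᵥ x) := by
      intro i
      have h := hterm i (Finset.mem_univ i)
      have h' : (θ₀ - μ i) * (s i ⬝ᵥ x)^2 = 0 := by linear_combination h
      rcases mul_eq_zero.mp h' with h'' | h''
      · have : μ i = θ₀ := by linarith
        rw [this]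
      · have : s i ⬝ᵥ x = 0 := by
          have := sq_eq_zero_iff.mp h''
          exact this
        rw [this]; ring
    funext v
    rw [hAx x v]
    calc ∑ i, μ i * (s i ⬝ᵥ x) * s i v = ∑ i, θ₀ * ((s i ⬝ᵥ x) * s i v) := by
          apply Finset.sum_congr rfl; intro i _; rw [hkey i]; ring
      _ = θ₀ * ∑ i, (s i ⬝ᵥ x) * s i v := by rw [Finset.mul_sum]
      _ = θ₀ * x v := by rw [← hexp]
      _ = (θ₀ • x) v := rfl
  have hsne : ∀ i, s i ≠ (0 : V → ℝ) := by
    intro i h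
    have h2 := horth i i
    rw [h] at h2
    simp [dotProduct] at h2
  obtain ⟨w, hw_pos, hw_eig, hw_simp⟩ :=
    perron_adj G hc θ₀ hRay hEqc ⟨s i₀, hsne i₀, by rw [heig i₀, hi₀]⟩
  have hcoef0 : ∀ x : V → ℝ, w ⬝ᵥ x = 0 → ∀ i, μ i = θ₀ → s i ⬝ᵥ x = 0 := by
    intro x hwx i hμ
    obtain ⟨c, hcc⟩ := hw_simp (s i) (by rw [heig i, hμ])
    rw [hcc, smul_dotProduct, hwx, smul_zero]
  have hpair : ∀ (p q : V) (a b : ℝ),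
      ((a • (Pi.single p 1 : V → ℝ) + b • (Pi.single q 1 : V → ℝ) : V → ℝ) ⬝ᵥ
        (A *ᵥ (a • (Pi.single p 1 : V → ℝ) + b • (Pi.single q 1 : V → ℝ) : V → ℝ))) =
      a * a * A p p + a * b * A p q + a * b * A q p + b * b * A q q := by
    intro p q a b
    rw [Matrix.mulVec_add, Matrix.mulVec_smul, Matrix.mulVec_smul, Matrix.mulVec_single_one,
      Matrix.mulVec_single_one]
    simp only [add_dotProduct, smul_dotProduct, dotProduct_add,
      dotProduct_smul, single_dotProduct, smul_eq_mul, mul_one, Pi.add_apply,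
      Pi.smul_apply, Matrix.col_apply]
    ring
  -- Part 1 : 0 ≤ θ₁
  have hθ₁nonneg : 0 ≤ θ₁ := by
    by_contra hneg
    push_neg at hneg
    by_cases hcomplete : ∀ u v : V, u ≠ v → G.Adj u v
    · apply hnreg
      refine ⟨Fintype.card V - 1, ?_⟩
      intro v
      have hnb : G.neighborFinset v = Finset.univ.erase v := by
        ext t
        simp only [SimpleGraph.mem_neighborFinset, Finset.mem_erase, Finset.mem_univ, and_true]
        constructor
        · intro h; exact (G.ne_of_adj h).symm
        · intro h; exact hcomplete v t (fun hh => h hh.symm)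
      rw [← SimpleGraph.card_neighborFinset_eq_degree, hnb,
        Finset.card_erase_of_mem (Finset.mem_univ v), Finset.card_univ]
    · push_neg at hcomplete
      obtain ⟨u, v, huv, hnadj⟩ := hcomplete
      set x : V → ℝ := (w v • (Pi.single u 1 : V → ℝ) + (-(w u)) • (Pi.single v 1 : V → ℝ) : V → ℝ) with hxdef
      have hwx : w ⬝ᵥ x = 0 := by
        rw [hxdef]
        simp only [dotProduct_add, dotProduct_smul, dotProduct_single,
          smul_eq_mul, mul_one]
        ring
      have hq : x ⬝ᵥ (A *ᵥ x) = 0 := by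
        rw [hxdef, hpair]
        have h1 : A u v = 0 := by simp [hAdef, hnadj]
        have h2 : A v u = 0 := by rw [hsym]; simp [hAdef, hnadj]
        rw [hdiag u, hdiag v, h1, h2]; ring
      have hxu : x u = w v := by
        rw [hxdef]
        simp only [Pi.add_apply, Pi.smul_apply, Pi.single_eq_same, smul_eq_mul, mul_one,
          Pi.single_eq_of_ne huv]
        ring
      have hxpos : 0 < x ⬝ᵥ x := by
        rw [dotProduct]
        refine Finset.sum_pos' (fun t _ => mul_self_nonneg (x t)) ⟨u, Finset.mem_univ u, ?_⟩
        rw [hxu]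
        exact mul_pos (hw_pos v) (hw_pos v)
      have hbound : x ⬝ᵥ (A *ᵥ x) ≤ θ₁ * (x ⬝ᵥ x) := by
        rw [hxAx, hxx, Finset.mul_sum]
        apply Finset.sum_le_sum
        intro i _
        rcases hmem i with h|h|h
        · rw [hcoef0 x hwx i h]; simp
        · rw [h]
        · rw [h]; nlinarith [sq_nonneg (s i ⬝ᵥ x)]
      nlinarith
  refine ⟨hθ₁nonneg, ?_, ?_⟩
  · -- forward : θ₁ = 0 → complete bipartite
    intro hθ10
    subst hθ10
    have hV : Nonempty V := hc.nonempty
    -- coefficients expressing θ₀-eigenvectors through w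
    have hks : ∀ i, ∃ kk : ℝ, (μ i = θ₀ → s i = kk • w) := by
      intro i
      by_cases h : μ i = θ₀
      · obtain ⟨c, hcc⟩ := hw_simp (s i) (by rw [heig i, h])
        exact ⟨c, fun _ => hcc⟩
      · exact ⟨0, fun hh => absurd hh h⟩
    choose k hk using hks
    set γ : ℝ := ∑ i, (μ i^2 - θ₂ * μ i) * (k i)^2 with hγdef
    have hA2 : ∀ u v, (∑ t, A u t * A t v) = ∑ i, μ i * (s i ⬝ᵥ (fun t => A t v)) * s i u := by
      intro u v
      exact hAx (fun t => A t v) u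
    have hcoefA : ∀ (v : V) (i : V), s i ⬝ᵥ (fun t => A t v) = μ i * s i v := by
      intro v i
      have h1 : s i ⬝ᵥ (fun t => A t v) = (A *ᵥ s i) v := by
        rw [Matrix.mulVec, dotProduct, dotProduct]
        apply Finset.sum_congr rfl; intro t _; rw [hsym v t]; ring
      rw [h1, heig i]
      rfl
    have hMw : ∀ u v, (∑ t, A u t * A t v) - θ₂ * A u v = γ * (w u * w v) := by
      intro u v
      have h1 : (∑ t, A u t * A t v) = ∑ i, μ i^2 * (s i u * s i v) := by
        rw [hA2 u v]
        apply Finset.sum_congr rfl; intro i _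
        rw [hcoefA v i]; ring
      have h2 : θ₂ * A u v = ∑ i, θ₂ * μ i * (s i u * s i v) := by
        rw [hent u v, Finset.mul_sum]
        apply Finset.sum_congr rfl; intro i _; ring
      rw [h1, h2, ← Finset.sum_sub_distrib]
      have h3 : ∀ i, μ i^2 * (s i u * s i v) - θ₂ * μ i * (s i u * s i v)
          = ((μ i^2 - θ₂ * μ i) * (k i)^2) * (w u * w v) := by
        intro i
        rcases hmem i with h|h|h
        · have hsk := hk i h
          have hku : s i u = k i * w u := by rw [hsk]; rfl
          have hkv : s i v = k i * w v := by rw [hsk]; rfl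
          rw [hku, hkv]; ring
        · rw [h]; ring
        · rw [h]; ring
      rw [Finset.sum_congr rfl fun i _ => h3 i, ← Finset.sum_mul, hγdef]
    have hdeg' : ∀ u, (∑ t, A u t * A t u) = (G.degree u : ℝ) := by
      intro u
      have h1 : ∀ t, A u t * A t u = if G.Adj u t then (1:ℝ) else 0 := by
        intro t
        rw [hsym t u]
        by_cases h : G.Adj u t <;> simp [hAdef, h]
      have hfil : (Finset.univ.filter fun t => G.Adj u t) = G.neighborFinset u := by
        ext t; simp [SimpleGraph.mem_neighborFinset]
      rw [Finset.sum_congr rfl fun t _ => h1 t, Finset.sum_boole, hfil,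
        SimpleGraph.card_neighborFinset_eq_degree]
    have hcard3 : 1 < Fintype.card V := by
      have hne02 : θ₀ ≠ θ₂ := ne_of_gt (lt_trans h12 h01)
      have hi02 : i₀ ≠ i₂ := fun h => hne02 (by rw [← hi₀, h, hi₂])
      exact Fintype.one_lt_card_iff_nontrivial.mpr ⟨⟨i₀, i₂, hi02⟩⟩
    have hadj_ex : ∀ u : V, ∃ t, G.Adj u t := by
      intro u
      obtain ⟨t, ht⟩ := Fintype.exists_ne_of_one_lt_card hcard3 u
      obtain ⟨p⟩ := hc.preconnected u t
      cases p with
      | nil => exact absurd rfl ht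
      | cons h q => exact ⟨_, h⟩
    have hγpos : 0 < γ := by
      set v₁ := Classical.arbitrary V
      have h1 := hMw v₁ v₁
      rw [hdiag v₁, hdeg' v₁, mul_zero, sub_zero] at h1
      have h2 : 0 < (G.degree v₁ : ℝ) := by
        have := (SimpleGraph.degree_pos_iff_exists_adj G v₁).mpr (hadj_ex v₁)
        exact_mod_cast this
      nlinarith [mul_pos (hw_pos v₁) (hw_pos v₁)]
    set ww : V → ℝ := fun t => Real.sqrt γ * w t with hwwdef
    have hwwpos : ∀ t, 0 < ww t := fun t => mul_pos (Real.sqrt_pos.mpr hγpos) (hw_pos t)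
    have hMM : ∀ u v, (∑ t, A u t * A t v) - θ₂ * A u v = ww u * ww v := by
      intro u v
      rw [hMw u v, hwwdef]
      have : Real.sqrt γ * w u * (Real.sqrt γ * w v)
          = (Real.sqrt γ * Real.sqrt γ) * (w u * w v) := by ring
      rw [this, Real.mul_self_sqrt hγpos.le]
    have hdegww : ∀ u, (G.degree u : ℝ) = ww u ^ 2 := by
      intro u
      have h1 := hMM u u
      rw [hdiag u, hdeg' u, mul_zero, sub_zero] at h1
      rw [h1]; ring
    -- no induced K₂ ∪ K₁
    have hbad : ∀ a b c : V, G.Adj a b → ¬ G.Adj a c → ¬ G.Adj b c → a ≠ c → b ≠ c → False := by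
      intro a b c hab hac hbc hane hbne
      set x : V → ℝ := (ww c • (Pi.single b 1 : V → ℝ) + (-(ww b)) • (Pi.single c 1 : V → ℝ) : V → ℝ)
        with hxdef
      have hwx : w ⬝ᵥ x = 0 := by
        rw [hxdef]
        simp only [dotProduct_add, dotProduct_smul, dotProduct_single,
          smul_eq_mul, mul_one, hwwdef]
        ring
      have hq : x ⬝ᵥ (A *ᵥ x) = 0 := by
        rw [hxdef, hpair]
        have h1 : A b c = 0 := by simp [hAdef, hbc]
        have h2 : A c b = 0 := by rw [hsym]; simp [hAdef, hbc]
        rw [hdiag b, hdiag c, h1, h2]; ring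
      have hcz : ∀ i, μ i * (s i ⬝ᵥ x) = 0 := by
        rw [hxAx] at hq
        have hnp : ∀ i ∈ Finset.univ, μ i * (s i ⬝ᵥ x)^2 ≤ 0 := by
          intro i _
          rcases hmem i with h|h|h
          · rw [hcoef0 x hwx i h]; simp
          · rw [h]; simp
          · rw [h]; nlinarith [sq_nonneg (s i ⬝ᵥ x)]
        have hterm := (Finset.sum_eq_zero_iff_of_nonpos hnp).mp hq
        intro i
        have h := hterm i (Finset.mem_univ i)
        rcases hmem i with h'|h'|h'
        · rw [hcoef0 x hwx i h']; ring
        · rw [h']; ring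
        · rw [h'] at h ⊢
          have : s i ⬝ᵥ x = 0 := by
            have h2 : (s i ⬝ᵥ x)^2 = 0 := by
              rcases mul_eq_zero.mp h with h3 | h3
              · exact absurd h3 (ne_of_lt hθ₂neg)
              · exact h3
            exact sq_eq_zero_iff.mp h2
          rw [this, mul_zero]
      have hAx0 : A *ᵥ x = 0 := by
        funext v
        rw [hAx x v]
        have : ∀ i, μ i * (s i ⬝ᵥ x) * s i v = 0 := by
          intro i; rw [hcz i, zero_mul]
        rw [Finset.sum_congr rfl fun i _ => this i, Finset.sum_const_zero]
        rfl
      have hcontra := congrFun hAx0 a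
      rw [hxdef, Matrix.mulVec_add, Matrix.mulVec_smul, Matrix.mulVec_smul,
        Matrix.mulVec_single_one, Matrix.mulVec_single_one] at hcontra
      simp only [Pi.add_apply, Pi.smul_apply, smul_eq_mul, mul_one, Pi.zero_apply,
        Matrix.col_apply] at hcontra
      have h1 : A a b = 1 := by simp [hAdef, hab]
      have h2 : A a c = 0 := by simp [hAdef, hac]
      rw [h1, h2] at hcontra
      have : ww c = 0 := by linarith
      exact (hwwpos c).ne' this
    -- nonadjacent vertices in same class have equal ww
    have hNsub : ∀ u v : V, u ≠ v → ¬ G.Adj u v → ∀ t, G.Adj u t → G.Adj v t := by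
      intro u v huv hnadj t hut
      by_contra hvt
      have htv : t ≠ v := by rintro rfl; exact hnadj hut
      exact hbad u t v hut hnadj (fun h => hvt h.symm) huv htv
    have hsame : ∀ u v : V, u ≠ v → ¬ G.Adj u v → ww u = ww v := by
      intro u v huv hnadj
      have hdeq : G.degree u = G.degree v := by
        have : G.neighborFinset u = G.neighborFinset v := by
          ext t
          simp only [SimpleGraph.mem_neighborFinset]
          exact ⟨hNsub u v huv hnadj t, hNsub v u huv.symm (fun h => hnadj h.symm) t⟩
        rw [← SimpleGraph.card_neighborFinset_eq_degree,
          ← SimpleGraph.card_neighborFinset_eq_degree, this]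
      have e : ww u^2 = ww v^2 := by
        rw [← hdegww u, ← hdegww v, hdeq]
      have h2 : (ww u - ww v) * (ww u + ww v) = 0 := by linear_combination e
      rcases mul_eq_zero.mp h2 with h3 | h3
      · linarith
      · linarith [hwwpos u, hwwpos v]
    -- the edge identity
    have hedge : ∀ u v : V, G.Adj u v →
        ww u^2 + ww v^2 - ww u * ww v = (Fintype.card V : ℝ) + θ₂ := by
      intro u v hadj
      have hunion : G.neighborFinset u ∪ G.neighborFinset v = Finset.univ := by
        ext t
        simp only [Finset.mem_union, SimpleGraph.mem_neighborFinset, Finset.mem_univ, iff_true]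
        by_contra h
        push_neg at h
        obtain ⟨hut, hvt⟩ := h
        by_cases htu : t = u
        · exact hvt (htu ▸ hadj.symm)
        · by_cases htv : t = v
          · exact hut (htv ▸ hadj)
          · exact hbad u v t hadj hut hvt (fun h => htu h.symm) (fun h => htv h.symm)
      have hcardeq := Finset.card_inter_add_card_union
        (G.neighborFinset u) (G.neighborFinset v)
      rw [hunion, Finset.card_univ, SimpleGraph.card_neighborFinset_eq_degree,
        SimpleGraph.card_neighborFinset_eq_degree] at hcardeq
      have hcardR : ((G.neighborFinset u ∩ G.neighborFinset v).card : ℝ) + (Fintype.card V : ℝ)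
          = (G.degree u : ℝ) + (G.degree v : ℝ) := by exact_mod_cast congrArg (Nat.cast (R := ℝ)) hcardeq
      have hcommon : (∑ t, A u t * A t v)
          = ((G.neighborFinset u ∩ G.neighborFinset v).card : ℝ) := by
        have h1 : ∀ t, A u t * A t v = if (G.Adj u t ∧ G.Adj v t) then (1:ℝ) else 0 := by
          intro t
          rw [hsym t v]
          by_cases h : G.Adj u t <;> by_cases h' : G.Adj v t <;> simp [hAdef, h, h']
        have hfil2 : (Finset.univ.filter fun t => G.Adj u t ∧ G.Adj v t)
            = G.neighborFinset u ∩ G.neighborFinset v := by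
          ext t; simp [SimpleGraph.mem_neighborFinset]
        rw [Finset.sum_congr rfl fun t _ => h1 t, Finset.sum_boole, hfil2]
      have h3 := hMM u v
      have h4 : A u v = 1 := by simp [hAdef, hadj]
      rw [hcommon, h4, mul_one] at h3
      have h5 := hdegww u
      have h6 := hdegww v
      linarith
    -- triangles force equal ww values
    have htrieq : ∀ a b c : V, G.Adj a b → G.Adj b c → G.Adj a c →
        ww a = ww b ∧ ww b = ww c := by
      intro a b c hab hbc hac
      have e1 := hedge a b hab
      have e2 := hedge b c hbc
      have e3 := hedge a c hac
      have h23 : (ww b - ww a) * (ww a + ww b - ww c) = 0 := by linear_combination e2 - e3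
      have hxy : ww a = ww b := by
        rcases mul_eq_zero.mp h23 with h3 | h3
        · linarith
        · have h13 : (ww b - ww c) * (ww b + ww c - ww a) = 0 := by linear_combination e1 - e3
          rcases mul_eq_zero.mp h13 with h4 | h4
          · linarith [hwwpos a]
          · linarith [hwwpos b]
      have h12' : (ww a - ww c) * (ww a + ww c - ww b) = 0 := by linear_combination e1 - e2
      have hyz : ww b = ww c := by
        rcases mul_eq_zero.mp h12' with h3 | h3
        · linarith
        · linarith [hwwpos c]
      exact ⟨hxy, hyz⟩
    -- triangle-free
    have htrifree : ∀ a b c : V, G.Adj a b → G.Adj b c → G.Adj a c → False := by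
      intro a b c hab hbc hac
      have hconst : ∀ v, ww v = ww a := by
        intro v
        by_cases hva : v = a
        · rw [hva]
        · by_cases h1 : G.Adj v a
          · by_cases hvb : v = b
            · rw [hvb]; exact (htrieq a b c hab hbc hac).1.symm
            · by_cases h2 : G.Adj v b
              · exact ((htrieq a b v hab h2.symm h1.symm).2.symm).trans
                  (htrieq a b v hab h2.symm h1.symm).1.symm
              · exact (hsame v b hvb h2).trans (htrieq a b c hab hbc hac).1.symm
          · exact hsame v a hva h1
      apply hnreg
      refine ⟨G.degree a, fun v => ?_⟩
      have : (G.degree v : ℝ) = (G.degree a : ℝ) := by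
        rw [hdegww v, hdegww a, hconst v]
      exact_mod_cast this
    -- assemble the bipartition
    set v₀ := Classical.arbitrary V with hv₀def
    refine ⟨{x | ¬ G.Adj x v₀}, ?_⟩
    intro u v
    simp only [Set.mem_setOf_eq]
    constructor
    · intro hadj hiff
      by_cases hu : G.Adj u v₀
      · have hv : G.Adj v v₀ := by
          by_contra hv
          exact (hiff.mpr hv) hu
        exact htrifree u v v₀ hadj hv hu
      · have hv : ¬ G.Adj v v₀ := hiff.mp hu
        by_cases huv₀ : u = v₀
        · exact hv (huv₀ ▸ hadj.symm)
        · by_cases hvv₀ : v = v₀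
          · exact hu (hvv₀ ▸ hadj)
          · exact hbad u v v₀ hadj hu hv huv₀ hvv₀
    · intro hne
      by_contra hnadj
      have huv : u ≠ v := by rintro rfl; exact hne Iff.rfl
      by_cases hu : G.Adj u v₀
      · have hv : ¬ G.Adj v v₀ := by
          by_contra hv
          exact hne (iff_of_false (not_not_intro hu) (not_not_intro hv))
        by_cases hvv₀ : v = v₀
        · exact hnadj (hvv₀ ▸ hu)
        · exact hbad u v₀ v hu hnadj (fun h => hv h.symm) huv (fun h => hvv₀ h.symm)
      · have hv : G.Adj v v₀ := by
          by_contra hv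
          exact hne (iff_of_true hu hv)
        by_cases huv₀ : u = v₀
        · subst huv₀
          exact hnadj hv.symm
        · exact hbad v v₀ u hv (fun h => hnadj h.symm) (fun h => hu h.symm) huv.symm
            (fun h => huv₀ h.symm)
  · -- backward : complete bipartite → θ₁ = 0
    rintro ⟨S, hS⟩
    have hne01 : θ₀ ≠ θ₁ := ne_of_gt h01
    have hne02 : θ₀ ≠ θ₂ := ne_of_gt (lt_trans h12 h01)
    have hne12 : θ₁ ≠ θ₂ := ne_of_gt h12
    have hi01 : i₀ ≠ i₁ := fun h => hne01 (by rw [← hi₀, h, hi₁])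
    have hi02 : i₀ ≠ i₂ := fun h => hne02 (by rw [← hi₀, h, hi₂])
    have hi12 : i₁ ≠ i₂ := fun h => hne12 (by rw [← hi₁, h, hi₂])
    have hpigeon : ∃ u v : V, u ≠ v ∧ ((u ∈ S) ↔ (v ∈ S)) := by
      rcases Classical.em (i₀ ∈ S ↔ i₁ ∈ S) with h | h
      · exact ⟨i₀, i₁, hi01, h⟩
      · rcases Classical.em (i₀ ∈ S ↔ i₂ ∈ S) with h' | h'
        · exact ⟨i₀, i₂, hi02, h'⟩
        · exact ⟨i₁, i₂, hi12, by tauto⟩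
    obtain ⟨u, v, huv, hside⟩ := hpigeon
    have hrow : A u = A v := by
      funext t
      have h1 : G.Adj u t ↔ G.Adj v t := by rw [hS u t, hS v t]; tauto
      simp only [hAdef, SimpleGraph.adjMatrix_apply]
      by_cases h : G.Adj u t
      · rw [if_pos h, if_pos (h1.mp h)]
      · rw [if_neg h, if_neg (fun hh => h (h1.mpr hh))]
    have hdet0 : (0:ℝ) = ∏ i, μ i := by
      rw [← hdet]
      exact (Matrix.det_zero_of_row_eq huv hrow).symm
    obtain ⟨i, _, hi⟩ := Finset.prod_eq_zero_iff.mp hdet0.symm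
    rcases hmem i with h|h|h
    · rw [h] at hi; linarith
    · rw [h] at hi; exact hi.symm ▸ hi
    · rw [h] at hi; linarith
end
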